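/- Let n ≥ 1, let Ω ⊆ ℝⁿ be a bounded measurable set equipped with the Lebesgue measure, let u : ℝⁿ → ℝ be differentiable with bounded gradient ∇u that is moreover Lipschitz continuous on ℝⁿ, and let Z be a closed linear subspace of L²(Ω; ℝ) (for instance finite-dimensional). On the Banach space C_b(Ω; ℝⁿ) of bounded continuous maps Φ : Ω → ℝⁿ with the supremum norm, define the distributed registration objective f(Φ) := min_{ζ∈Z} (1/2) ∫_Ω (u(Φ(x)) − ζ(x))² dx, and let ζ_Φ ∈ Z denote the L²(Ω)-orthogonal projection of x ↦ u(Φ(x)) onto Z (which realizes the minimum). Then f is Fréchet differentiable at every Φ ∈ C_b(Ω; ℝⁿ), with Fréchet derivative Df[Φ](h) = ∫_Ω (u(Φ(x)) − ζ_Φ(x)) · ∇u(Φ(x)) · h(x) dx. -/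

import Mathlib

open MeasureTheory BoundedContinuousFunction
open scoped ENNReal NNReal
open Submodule

set_option synthInstance.maxHeartbeats 1000000
set_option maxHeartbeats 1000000

/-- Quadratic Taylor bound for a function with Lipschitz gradient. -/
lemma taylor_quad {n : ℕ} (u : EuclideanSpace ℝ (Fin n) → ℝ)
    (hu : Differentiable ℝ u) (K : NNReal) (hlip : LipschitzWith K (gradient u))
    (y v : EuclideanSpace ℝ (Fin n)) :
    |u (y + v) - u y - inner ℝ (gradient u y) v| ≤ K * ‖v‖ ^ 2 := by
  set φ : ℝ → ℝ := fun t => u (y + t • v) - t * inner ℝ (gradient u y) v with hφ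
  have hgrad : ∀ x, HasFDerivAt u (InnerProductSpace.toDual ℝ _ (gradient u x)) x := fun x =>
    ((hu x).hasGradientAt).hasFDerivAt
  have hderiv : ∀ t : ℝ, HasDerivAt φ
      ((inner ℝ (gradient u (y + t • v)) v : ℝ) - inner ℝ (gradient u y) v) t := by
    intro t
    have h1 : HasDerivAt (fun t : ℝ => y + t • v) v t := by
      simpa using ((hasDerivAt_id t).smul_const v).const_add y
    have h2 := (hgrad (y + t • v)).comp_hasDerivAt t h1
    simp only [InnerProductSpace.toDual_apply_apply] at h2
    exact h2.sub (hasDerivAt_mul_const _)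
  have hbound : ∀ t ∈ Set.Ico (0:ℝ) 1,
      ‖(inner ℝ (gradient u (y + t • v)) v : ℝ) - inner ℝ (gradient u y) v‖ ≤ K * ‖v‖ ^ 2 := by
    intro t ht
    rw [← inner_sub_left]
    calc ‖(inner ℝ (gradient u (y + t • v) - gradient u y) v : ℝ)‖
        ≤ ‖gradient u (y + t • v) - gradient u y‖ * ‖v‖ := norm_inner_le_norm _ _
      _ ≤ (K * ‖t • v‖) * ‖v‖ := by
          gcongr
          simpa [dist_eq_norm] using hlip.dist_le_mul (y + t • v) y
      _ ≤ (K * ‖v‖) * ‖v‖ := by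
          gcongr
          rw [norm_smul]
          have h01 : |t| ≤ 1 := by rw [abs_le]; constructor <;> linarith [ht.1, ht.2]
          calc ‖(t:ℝ)‖ * ‖v‖ ≤ 1 * ‖v‖ := by gcongr; simpa using h01
            _ = ‖v‖ := one_mul _
      _ = K * ‖v‖ ^ 2 := by ring
  have key := norm_image_sub_le_of_norm_deriv_le_segment' (f := φ)
    (f' := fun t => (inner ℝ (gradient u (y + t • v)) v : ℝ) - inner ℝ (gradient u y) v)
    (C := K * ‖v‖ ^ 2) (fun t _ => (hderiv t).hasDerivWithinAt) hbound 1
    ⟨zero_le_one, le_refl 1⟩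
  have h10 : φ 1 - φ 0 = u (y + v) - u y - inner ℝ (gradient u y) v := by
    simp only [hφ, one_smul, zero_smul, one_mul, zero_mul, add_zero, sub_zero]
    ring
  rw [h10, Real.norm_eq_abs] at key
  simpa using key

/-- Fréchet derivative of half squared distance to a closed subspace of a Hilbert space. -/
lemma half_dist_sq_hasFDerivAt {E : Type*} [NormedAddCommGroup E] [InnerProductSpace ℝ E]
    (Z : Submodule ℝ E) [HasOrthogonalProjection Z] (v : E) :
    HasFDerivAt (fun w => (1/2 : ℝ) * ‖w - (orthogonalProjection Z w : E)‖ ^ 2)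
      (innerSL ℝ (v - (orthogonalProjection Z v : E))) v := by
  set P : E →L[ℝ] E := Z.subtypeL.comp (orthogonalProjection Z) with hP
  set q : E →L[ℝ] E := ContinuousLinearMap.id ℝ E - P with hq
  have hqapp : ∀ w, q w = w - (orthogonalProjection Z w : E) := fun w => rfl
  have horth : ∀ w h : E, (inner ℝ (q w) (P h) : ℝ) = 0 := by
    intro w h
    rw [real_inner_comm]
    exact (sub_starProjection_mem_orthogonal (K := Z) w) _ (orthogonalProjection Z h).2
  have e2 : ∀ h, (inner ℝ (q v) (q h) : ℝ) = inner ℝ (q v) h := by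
    intro h
    have : q h = h - P h := rfl
    rw [this, inner_sub_right, horth, sub_zero]
  rw [hasFDerivAt_iff_isLittleO_nhds_zero]
  have hexp : (fun h : E => (1/2 : ℝ) * ‖(v + h) - (orthogonalProjection Z (v+h) : E)‖ ^ 2
      - (1/2 : ℝ) * ‖v - (orthogonalProjection Z v : E)‖ ^ 2
      - innerSL ℝ (v - (orthogonalProjection Z v : E)) h)
      = fun h : E => (1/2 : ℝ) * ‖q h‖ ^ 2 := by
    funext h
    simp only [← hqapp, map_add q, norm_add_sq_real, innerSL_apply_apply, e2]
    ring
  rw [hexp]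
  rw [← Asymptotics.isLittleO_norm_right]
  have h1 : (fun h : E => ‖q h‖) =o[nhds 0] (fun _ : E => (1:ℝ)) := by
    rw [Asymptotics.isLittleO_one_iff]
    have := q.continuous.tendsto 0
    rw [map_zero] at this
    simpa [Function.comp_def] using (continuous_norm.tendsto (0:E)).comp this
  have h2 : (fun h : E => ‖q h‖) =O[nhds 0] (fun h : E => ‖h‖) := by
    simpa using ((q.isBigO_id (⊤ : Filter E)).mono le_top).norm_norm
  have := (h1.mul_isBigO h2).const_mul_left (1/2 : ℝ)
  simpa [pow_two, mul_assoc] using this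

/-- `∫ (f - w)² = ‖toLp f - w‖²` in `L²`. -/
lemma integral_sq_eq_norm_sq {α : Type*} [MeasurableSpace α] (μ : Measure α)
    (f : α → ℝ) (hf : MemLp f 2 μ) (w : Lp ℝ 2 μ) :
    ∫ x, (f x - w x) ^ 2 ∂μ = ‖hf.toLp f - w‖ ^ 2 := by
  rw [← real_inner_self_eq_norm_sq, L2.inner_def]
  refine integral_congr_ae ?_
  filter_upwards [hf.coeFn_toLp, Lp.coeFn_sub (hf.toLp f) w] with x h1 h2
  rw [h2]
  simp [RCLike.inner_apply, pow_two, h1]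

/-- `L²` norm bound of `toLp` of a uniformly bounded function on a finite measure space. -/
lemma norm_toLp_le_of_bound {α : Type*} [MeasurableSpace α] (μ : Measure α)
    [IsFiniteMeasure μ] (f : α → ℝ) (hf : MemLp f 2 μ) (M : ℝ) (hM : 0 ≤ M)
    (hb : ∀ x, ‖f x‖ ≤ M) :
    ‖hf.toLp f‖ ≤ (μ Set.univ ^ ((2:ℝ≥0∞).toReal)⁻¹).toReal * M := by
  rw [Lp.norm_toLp]
  have hle := eLpNorm_le_of_ae_bound (p := 2) (μ := μ) (Filter.Eventually.of_forall hb)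
  have hfin : μ Set.univ ^ ((2:ℝ≥0∞).toReal)⁻¹ * ENNReal.ofReal M ≠ ⊤ := by
    apply ENNReal.mul_ne_top _ ENNReal.ofReal_ne_top
    exact (ENNReal.rpow_ne_top_of_nonneg (by norm_num) (measure_ne_top μ _))
  calc (eLpNorm f 2 μ).toReal
      ≤ (μ Set.univ ^ ((2:ℝ≥0∞).toReal)⁻¹ * ENNReal.ofReal M).toReal :=
        ENNReal.toReal_mono hfin hle
    _ = (μ Set.univ ^ ((2:ℝ≥0∞).toReal)⁻¹).toReal * M := by
        rw [ENNReal.toReal_mul, ENNReal.toReal_ofReal hM]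

theorem distributed_objective_frechet_differentiable
    (n : ℕ) (hn : 1 ≤ n)
    (Ω : Set (EuclideanSpace ℝ (Fin n)))
    (hmeas : MeasurableSet Ω) (hbdd : Bornology.IsBounded Ω)
    (u : EuclideanSpace ℝ (Fin n) → ℝ)
    (hu : Differentiable ℝ u)
    (C : ℝ) (hgrad_bdd : ∀ x, ‖gradient u x‖ ≤ C)
    (K : NNReal) (hgrad_lip : LipschitzWith K (gradient u))
    (μ : Measure Ω) (hμ : μ = Measure.comap Subtype.val MeasureTheory.volume)
    (Z : Submodule ℝ (Lp ℝ 2 μ)) (hZ : IsClosed (Z : Set (Lp ℝ 2 μ)))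
    (f : (Ω →ᵇ EuclideanSpace ℝ (Fin n)) → ℝ)
    (hf : ∀ Φ : Ω →ᵇ EuclideanSpace ℝ (Fin n),
      f Φ = ⨅ ζ : Z, (1/2) * ∫ x, (u (Φ x) - (ζ : Lp ℝ 2 μ) x) ^ 2 ∂μ) :
    ∀ Φ : Ω →ᵇ EuclideanSpace ℝ (Fin n),
      ∃ ζΦ : Lp ℝ 2 μ, ζΦ ∈ Z ∧
        (∀ ζ ∈ Z, ∫ x, (u (Φ x) - ζΦ x) ^ 2 ∂μ ≤
          ∫ x, (u (Φ x) - (ζ : Lp ℝ 2 μ) x) ^ 2 ∂μ) ∧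
        f Φ = (1/2) * ∫ x, (u (Φ x) - ζΦ x) ^ 2 ∂μ ∧
        ∃ L : (Ω →ᵇ EuclideanSpace ℝ (Fin n)) →L[ℝ] ℝ,
          HasFDerivAt f L Φ ∧
          ∀ h : Ω →ᵇ EuclideanSpace ℝ (Fin n),
            L h = ∫ x, (u (Φ x) - ζΦ x) *
              (inner ℝ (gradient u (Φ x)) (h x) : ℝ) ∂μ := by
  intro Φ
  haveI : IsFiniteMeasure μ := by
    constructor
    rw [hμ, (MeasurableEmbedding.subtype_coe hmeas).comap_apply]
    simpa using hbdd.measure_lt_top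
  haveI : CompleteSpace Z := hZ.completeSpace_coe
  have hC0 : (0:ℝ) ≤ C := le_trans (norm_nonneg _) (hgrad_bdd 0)
  have hgc : Continuous (gradient u) := hgrad_lip.continuous
  set A : ℝ := (μ Set.univ ^ ((2:ℝ≥0∞).toReal)⁻¹).toReal with hA
  have hA0 : 0 ≤ A := ENNReal.toReal_nonneg
  -- membership of u ∘ Ψ in L²
  have hmem : ∀ Ψ : Ω →ᵇ EuclideanSpace ℝ (Fin n), MemLp (fun x : Ω => u (Ψ x)) 2 μ := by
    intro Ψ
    obtain ⟨M, hM⟩ := (isCompact_closedBall (0 : EuclideanSpace ℝ (Fin n))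
      ‖Ψ‖).exists_bound_of_continuousOn hu.continuous.continuousOn
    refine MemLp.of_bound ((hu.continuous.comp Ψ.continuous).aestronglyMeasurable) M ?_
    refine Filter.Eventually.of_forall fun x => ?_
    exact hM (Ψ x) (by simpa [Metric.mem_closedBall, dist_zero_right] using Ψ.norm_coe_le_norm x)
  set G : (Ω →ᵇ EuclideanSpace ℝ (Fin n)) → Lp ℝ 2 μ := fun Ψ => (hmem Ψ).toLp _ with hGdef
  have hint : ∀ (Ψ : Ω →ᵇ EuclideanSpace ℝ (Fin n)) (w : Lp ℝ 2 μ),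
      ∫ x, (u (Ψ x) - w x) ^ 2 ∂μ = ‖G Ψ - w‖ ^ 2 := fun Ψ w =>
    integral_sq_eq_norm_sq μ _ (hmem Ψ) w
  -- projection and minimality in norm
  have hminnorm : ∀ (Ψ : Ω →ᵇ EuclideanSpace ℝ (Fin n)) (w : Z),
      ‖G Ψ - (orthogonalProjection Z (G Ψ) : Lp ℝ 2 μ)‖ ≤ ‖G Ψ - (w : Lp ℝ 2 μ)‖ := by
    intro Ψ w
    rw [show ‖G Ψ - (orthogonalProjection Z (G Ψ) : Lp ℝ 2 μ)‖ = _ from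
      Submodule.starProjection_minimal (G Ψ)]
    refine ciInf_le ⟨0, ?_⟩ w
    rintro r ⟨v, rfl⟩
    exact norm_nonneg _
  -- value of f
  have hfF : ∀ Ψ : Ω →ᵇ EuclideanSpace ℝ (Fin n),
      f Ψ = (1/2 : ℝ) * ‖G Ψ - (orthogonalProjection Z (G Ψ) : Lp ℝ 2 μ)‖ ^ 2 := by
    intro Ψ
    rw [hf Ψ]
    have : (fun ζ : Z => (1/2 : ℝ) * ∫ x, (u (Ψ x) - (ζ : Lp ℝ 2 μ) x) ^ 2 ∂μ)
        = fun ζ : Z => (1/2 : ℝ) * ‖G Ψ - (ζ : Lp ℝ 2 μ)‖ ^ 2 := by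
      funext ζ; rw [hint Ψ]
    rw [iInf_congr (fun ζ => congrFun this ζ)]
    refine le_antisymm ?_ ?_
    · refine ciInf_le ⟨0, ?_⟩ (orthogonalProjection Z (G Ψ))
      rintro r ⟨v, rfl⟩
      positivity
    · refine le_ciInf fun w => ?_
      exact mul_le_mul_of_nonneg_left
        (pow_le_pow_left₀ (norm_nonneg _) (hminnorm Ψ w) 2) (by norm_num)
  set ζΦ : Lp ℝ 2 μ := (orthogonalProjection Z (G Φ) : Lp ℝ 2 μ) with hζΦ
  -- the derivative candidate on the L² side, composed with the derivative of G
  have hD : ∀ h : Ω →ᵇ EuclideanSpace ℝ (Fin n),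
      MemLp (fun x : Ω => (inner ℝ (gradient u (Φ x)) (h x) : ℝ)) 2 μ := by
    intro h
    refine MemLp.of_bound ?_ (C * ‖h‖) (Filter.Eventually.of_forall fun x => ?_)
    · exact (Continuous.inner (hgc.comp Φ.continuous) h.continuous).aestronglyMeasurable
    · calc ‖(inner ℝ (gradient u (Φ x)) (h x) : ℝ)‖
          ≤ ‖gradient u (Φ x)‖ * ‖h x‖ := norm_inner_le_norm _ _
        _ ≤ C * ‖h‖ := mul_le_mul (hgrad_bdd _) (h.norm_coe_le_norm x) (norm_nonneg _) hC0
  set Dlin : (Ω →ᵇ EuclideanSpace ℝ (Fin n)) →ₗ[ℝ] Lp ℝ 2 μ :=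
    { toFun := fun h => (hD h).toLp _
      map_add' := by
        intro h h'
        rw [MemLp.toLp_congr (hD (h + h')) ((hD h).add (hD h'))
          (Filter.Eventually.of_forall fun x => by
            simp [inner_add_right])]
        exact MemLp.toLp_add _ _
      map_smul' := by
        intro c h
        dsimp only [RingHom.id_apply]
        rw [MemLp.toLp_congr (hD (c • h)) ((hD h).const_smul c)
          (Filter.Eventually.of_forall fun x => by
            simp [inner_smul_right])]
        exact MemLp.toLp_const_smul c _ } with hDlin
  have hDbound : ∀ h, ‖Dlin h‖ ≤ A * C * ‖h‖ := by
    intro h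
    have := norm_toLp_le_of_bound μ _ (hD h) (C * ‖h‖) (by positivity) (fun x => by
      calc ‖(inner ℝ (gradient u (Φ x)) (h x) : ℝ)‖
          ≤ ‖gradient u (Φ x)‖ * ‖h x‖ := norm_inner_le_norm _ _
        _ ≤ C * ‖h‖ := mul_le_mul (hgrad_bdd _) (h.norm_coe_le_norm x) (norm_nonneg _) hC0)
    calc ‖Dlin h‖ ≤ A * (C * ‖h‖) := this
      _ = A * C * ‖h‖ := by ring
  set D : (Ω →ᵇ EuclideanSpace ℝ (Fin n)) →L[ℝ] Lp ℝ 2 μ :=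
    Dlin.mkContinuous (A * C) hDbound with hDdef
  -- G is Fréchet differentiable at Φ with derivative D
  have hGd : HasFDerivAt G D Φ := by
    rw [hasFDerivAt_iff_isLittleO_nhds_zero]
    have herr : ∀ h : Ω →ᵇ EuclideanSpace ℝ (Fin n),
        ‖G (Φ + h) - G Φ - D h‖ ≤ A * K * (‖h‖ * ‖h‖) := by
      intro h
      have e1 : (((hmem (Φ + h)).sub (hmem Φ)).sub (hD h)).toLp _ = G (Φ + h) - G Φ - D h := by
        rw [MemLp.toLp_sub ((hmem (Φ + h)).sub (hmem Φ)) (hD h),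
          MemLp.toLp_sub (hmem (Φ + h)) (hmem Φ)]
        rfl
      rw [← e1]
      have hb : ∀ x : Ω, ‖((fun x : Ω => u ((Φ + h) x)) - (fun x : Ω => u (Φ x))
          - fun x : Ω => (inner ℝ (gradient u (Φ x)) (h x) : ℝ)) x‖ ≤ K * ‖h‖ ^ 2 := by
        intro x
        simp only [Pi.sub_apply, BoundedContinuousFunction.coe_add, Pi.add_apply,
          Real.norm_eq_abs]
        calc |u (Φ x + h x) - u (Φ x) - (inner ℝ (gradient u (Φ x)) (h x) : ℝ)|
            ≤ K * ‖h x‖ ^ 2 := taylor_quad u hu K hgrad_lip (Φ x) (h x)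
          _ ≤ K * ‖h‖ ^ 2 := by
              gcongr
              exact h.norm_coe_le_norm x
      refine le_trans (norm_toLp_le_of_bound μ
        ((fun x : Ω => u ((Φ + h) x)) - (fun x : Ω => u (Φ x))
          - fun x : Ω => (inner ℝ (gradient u (Φ x)) (h x) : ℝ))
        (((hmem (Φ + h)).sub (hmem Φ)).sub (hD h)) ((K : ℝ) * ‖h‖ ^ 2)
        (by positivity) hb) (le_of_eq (by ring))
    refine Asymptotics.IsBigO.trans_isLittleO
      (Asymptotics.IsBigO.of_bound
        (g := fun h : Ω →ᵇ EuclideanSpace ℝ (Fin n) => ‖h‖ * ‖h‖) (A * K) ?_) ?_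
    · refine Filter.Eventually.of_forall fun h => ?_
      have := herr h
      calc ‖G (Φ + h) - G Φ - D h‖ ≤ A * K * (‖h‖ * ‖h‖) := this
        _ = A * K * ‖‖h‖ * ‖h‖‖ := by
            rw [Real.norm_eq_abs, abs_of_nonneg (by positivity)]
    · rw [← Asymptotics.isLittleO_norm_right]
      have h1 : (fun h : Ω →ᵇ EuclideanSpace ℝ (Fin n) => ‖h‖)
          =o[nhds 0] (fun _ => (1:ℝ)) := by
        rw [Asymptotics.isLittleO_one_iff]
        exact tendsto_norm_zero
      simpa using h1.mul_isBigO
        (Asymptotics.isBigO_refl (fun h : Ω →ᵇ EuclideanSpace ℝ (Fin n) => ‖h‖) _)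
  have hcomp := (half_dist_sq_hasFDerivAt Z (G Φ)).comp Φ hGd
  have hfun : f = (fun w : Lp ℝ 2 μ =>
      (1/2 : ℝ) * ‖w - (orthogonalProjection Z w : Lp ℝ 2 μ)‖ ^ 2) ∘ G := funext hfF
  refine ⟨ζΦ, (orthogonalProjection Z (G Φ)).2, ?_, ?_, (innerSL ℝ (G Φ - ζΦ)).comp D, ?_, ?_⟩
  · intro w hw
    rw [hint Φ, hint Φ]
    exact pow_le_pow_left₀ (norm_nonneg _) (hminnorm Φ ⟨w, hw⟩) 2
  · rw [hfF Φ, hint Φ]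
  · rw [hfun]
    exact hcomp
  · intro h
    have h0 : ((innerSL ℝ (G Φ - ζΦ)).comp D) h = inner ℝ (G Φ - ζΦ) ((hD h).toLp _) := rfl
    rw [h0, L2.inner_def]
    refine integral_congr_ae ?_
    filter_upwards [Lp.coeFn_sub (G Φ) ζΦ, (hmem Φ).coeFn_toLp, (hD h).coeFn_toLp]
      with x h1 h2 h3
    rw [h1]
    simp only [Pi.sub_apply, RCLike.inner_apply, starRingEnd_apply, star_trivial]
    rw [h2, h3]
    ring
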